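/- For any element e of a matroid M, at least one of the following holds: no tangle of K(M) splits in K(M \ e), or no tangle of K(M) splits in K(M / e). That is, e can be removed by deletion or contraction in such a way that no tangle splits. -/

import Mathlib

open Set

variable {α : Type*} {V : Type*}

/-- An (unbundled) connectivity-system candidate: a ground set together with a
connectivity function on its subsets. -/
structure PreSys (α : Type*) where
  E : Set α
  lam : Set α → ℕ

/-- `K` is a connectivity system: the ground set is finite and the connectivity
function is symmetric and submodular on subsets of the ground set. -/
def PreSys.IsConnSys (K : PreSys α) : Prop :=
  K.E.Finite ∧
  (∀ X ⊆ K.E, K.lam X = K.lam (K.E \ X)) ∧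
  (∀ X ⊆ K.E, ∀ Y ⊆ K.E, K.lam (X ∩ Y) + K.lam (X ∪ Y) ≤ K.lam X + K.lam Y)

/-- A tangle of order `k` in a connectivity system. -/
def IsTangle (K : PreSys α) (k : ℕ) (T : Set (Set α)) : Prop :=
  (∀ A ∈ T, A ⊆ K.E ∧ K.lam A < k) ∧
  (∀ A ⊆ K.E, K.lam A < k → (A ∈ T ↔ (K.E \ A) ∉ T)) ∧
  (∀ A ∈ T, ∀ B ∈ T, ∀ C ∈ T, A ∪ B ∪ C ≠ K.E) ∧
  (∀ A ∈ T, A.ncard ≠ K.E.ncard - 1)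

/-- `K` dominates `K₀`. -/
def Dominates (K K₀ : PreSys α) : Prop :=
  K₀.E ⊆ K.E ∧ ∀ X ⊆ K₀.E, K₀.lam X ≤ K.lam X

/-- The collection of subsets of `K.E` of `K`-connectivity `< k` whose trace on
`K₀.E` lies in `T₀`; when `K` dominates `K₀` and `T₀` is a tangle, this is the
tangle induced by `T₀` in `K`. -/
def InducedTangle (K K₀ : PreSys α) (k : ℕ) (T₀ : Set (Set α)) : Set (Set α) :=
  {X | X ⊆ K.E ∧ K.lam X < k ∧ X ∩ K₀.E ∈ T₀}

/-- `K₀` adheres to `K`. -/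
def Adheres (K₀ K : PreSys α) : Prop :=
  Dominates K K₀ ∧
  ∀ A B : Set α, A ∪ B = K₀.E → Disjoint A B →
    ∃ X₁ X₂ : Set α, Disjoint X₁ X₂ ∧ (X₁ ∪ X₂ = A ∨ X₁ ∪ X₂ = B) ∧
      K.lam X₁ ≤ K₀.lam A ∧ K.lam X₂ ≤ K₀.lam A

/-- The tangle `T` of order `k` in `K` splits in `K₀`: two distinct tangles of
order `k` in `K₀` both induce `T`. -/
def Splits (K K₀ : PreSys α) (k : ℕ) (T : Set (Set α)) : Prop :=
  ∃ T₁ T₂ : Set (Set α), T₁ ≠ T₂ ∧ IsTangle K₀ k T₁ ∧ IsTangle K₀ k T₂ ∧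
    InducedTangle K K₀ k T₁ = T ∧ InducedTangle K K₀ k T₂ = T

/-- `K` is `k`-entangled: for each `t ≤ k` there is at most one tangle of order `t`. -/
def Entangled (K : PreSys α) (k : ℕ) : Prop :=
  ∀ t ≤ k, ∀ T₁ T₂ : Set (Set α), IsTangle K t T₁ → IsTangle K t T₂ → T₁ = T₂

/-! ### Matroids -/

/-- The rank of a set in a matroid: the largest cardinality of an independent
subset of `X`. -/
noncomputable def mrank (M : Matroid α) (X : Set α) : ℕ :=
  sSup {n | ∃ I, M.Indep I ∧ I ⊆ X ∧ I.ncard = n}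

/-- The connectivity function `λ_M(X) = r(X) + r(E \ X) - r(M) + 1` of a matroid. -/
noncomputable def lamM (M : Matroid α) (X : Set α) : ℕ :=
  mrank M X + mrank M (M.E \ X) - mrank M M.E + 1

/-- The connectivity function of the deletion `M \ e`, expressed via the rank
function of `M` (for `X ⊆ E(M) \ {e}` one has `r_{M\e}(X) = r_M(X)`). -/
noncomputable def lamDel (M : Matroid α) (e : α) (X : Set α) : ℕ :=
  mrank M X + mrank M ((M.E \ {e}) \ X) - mrank M (M.E \ {e}) + 1

/-- The connectivity function of the contraction `M / e`, expressed via the rank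
function of `M` (for `Y ⊆ E(M) \ {e}` one has `r_{M/e}(Y) = r_M(Y ∪ {e}) - r_M({e})`,
and `r(M/e) = r(M) - r_M({e})`). -/
noncomputable def lamCon (M : Matroid α) (e : α) (X : Set α) : ℕ :=
  mrank M (X ∪ {e}) + mrank M (((M.E \ {e}) \ X) ∪ {e}) - mrank M {e} - mrank M M.E + 1

/-- The connectivity system `K(M)` of a matroid `M`. -/
noncomputable def KM (M : Matroid α) : PreSys α := ⟨M.E, lamM M⟩

/-- The connectivity system `K(M \ e)`. -/
noncomputable def KDel (M : Matroid α) (e : α) : PreSys α := ⟨M.E \ {e}, lamDel M e⟩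

/-- The connectivity system `K(M / e)`. -/
noncomputable def KCon (M : Matroid α) (e : α) : PreSys α := ⟨M.E \ {e}, lamCon M e⟩

/-! ### Graphs, cut-rank and pivoting -/

/-- The cut-rank, relative to a ground set `S` of vertices, of a set `X`:
the GF(2)-rank of the adjacency submatrix with rows `X ∩ S` and columns `S \ X`.
For an induced subgraph of `G` on `S` this is its cut-rank function. -/
noncomputable def cutRankOn (G : SimpleGraph V) [Fintype V] (S X : Set V) : ℕ :=
  letI : Fintype ↥(X ∩ S) := (Set.toFinite _).fintype
  letI : Fintype ↥(S \ X) := (Set.toFinite _).fintype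
  letI : DecidableRel G.Adj := Classical.decRel _
  Matrix.rank (Matrix.of fun (a : ↥(X ∩ S)) (b : ↥(S \ X)) =>
    if G.Adj a.1 b.1 then (1 : ZMod 2) else 0)

/-- The cut-rank function `ρ_G` of a graph `G`. -/
noncomputable def cutRank (G : SimpleGraph V) [Fintype V] (X : Set V) : ℕ :=
  cutRankOn G Set.univ X

/-- Local complementation at a vertex `v`: adjacency among the neighbours of `v`
is complemented. -/
def localComp (G : SimpleGraph V) (v : V) : SimpleGraph V where
  Adj a b := a ≠ b ∧
    ((G.Adj v a ∧ G.Adj v b ∧ ¬ G.Adj a b) ∨ (¬ (G.Adj v a ∧ G.Adj v b) ∧ G.Adj a b))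
  symm := by
    constructor
    intro a b h
    obtain ⟨hab, h⟩ := h
    refine ⟨hab.symm, ?_⟩
    rcases h with ⟨h1, h2, h3⟩ | ⟨h1, h2⟩
    · exact Or.inl ⟨h2, h1, fun h => h3 h.symm⟩
    · exact Or.inr ⟨fun h => h1 ⟨h.2, h.1⟩, h2.symm⟩
  loopless := ⟨fun a h => h.1 rfl⟩

/-- The pivot `G × e` on an edge `e = uv`, defined as `G * u * v * u` where `*`
denotes local complementation. -/
def pivot (G : SimpleGraph V) (u v : V) : SimpleGraph V :=
  localComp (localComp (localComp G u) v) u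

/-- The connectivity system `CR(G) = (V(G), ρ_G)`. -/
noncomputable def CR (G : SimpleGraph V) [Fintype V] : PreSys V :=
  ⟨Set.univ, cutRank G⟩

/-- The connectivity system `CR(G - v)` of the graph obtained by deleting the
vertex `v`: ground set `V \ {v}` with the cut-rank computed inside `V \ {v}`. -/
noncomputable def CRdel (G : SimpleGraph V) [Fintype V] (v : V) : PreSys V :=
  ⟨{v}ᶜ, cutRankOn G {v}ᶜ⟩

/-! ### Partial branch-decompositions -/

/-- A partial branch-decomposition of a connectivity system `K`: a cubic tree
(each vertex of degree 1 or 3) together with a map from the ground set to the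
leaves of the tree. -/
structure PBD (K : PreSys α) (V : Type*) where
  tree : SimpleGraph V
  isTree : tree.IsTree
  cubic : ∀ x : V, (tree.neighborSet x).ncard = 1 ∨ (tree.neighborSet x).ncard = 3
  f : α → V
  maps : ∀ a ∈ K.E, (tree.neighborSet (f a)).ncard = 1

/-- A leaf of the cubic tree of a partial branch-decomposition. -/
def PBD.IsLeaf {K : PreSys α} (D : PBD K V) (x : V) : Prop :=
  (D.tree.neighborSet x).ncard = 1

/-- The side of the edge `uw` of the tree `tr` towards `u`: the elements of the
ground set mapped by `f` into the component of `tr - uw` containing `u`. -/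
def edgeSide (K : PreSys α) (tr : SimpleGraph V) (f : α → V) (u w : V) : Set α :=
  {a | a ∈ K.E ∧ (tr.deleteEdges {s(u, w)}).Reachable (f a) u}

/-- The partial branch-decomposition data `(tr, f)` has width at most `t`:
every edge of the tree induces a partition whose sides have connectivity at most `t`. -/
def widthLE (K : PreSys α) (tr : SimpleGraph V) (f : α → V) (t : ℕ) : Prop :=
  ∀ u w : V, tr.Adj u w → K.lam (edgeSide K tr f u w) ≤ t

/-- The set displayed by the vertex `x`: the elements of the ground set mapped to `x`. -/
def display (K : PreSys α) (f : α → V) (x : V) : Set α :=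
  {a | a ∈ K.E ∧ f a = x}

/-- `X` is weakly `t`-branched: `λ(X) ≤ t` and there is a partial
branch-decomposition of width at most `t` in which every leaf displays a subset
of `E \ X` or a singleton. -/
def WeaklyBranched (K : PreSys α) (X : Set α) (t : ℕ) : Prop :=
  K.lam X ≤ t ∧
    ∃ (V : Type) (_ : Fintype V) (D : PBD K V), widthLE K D.tree D.f t ∧
      ∀ x : V, D.IsLeaf x →
        (display K D.f x ⊆ K.E \ X ∨ ∃ a : α, display K D.f x = {a})

/-- `X` is `t`-branched: there is a partial branch-decomposition of width at most
`t` in which some leaf displays `E \ X` and every other leaf displays at most one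
element of `X`. -/
def Branched (K : PreSys α) (X : Set α) (t : ℕ) : Prop :=
  ∃ (V : Type) (_ : Fintype V) (D : PBD K V), widthLE K D.tree D.f t ∧
    ∃ r : V, D.IsLeaf r ∧ display K D.f r = K.E \ X ∧
      ∀ x : V, D.IsLeaf x → x ≠ r → (display K D.f x ∩ X).ncard ≤ 1

/-- `κ_K(X, Y)`: the minimum connectivity of a set `Z` with `X ⊆ Z ⊆ E \ Y`. -/
noncomputable def kappa (K : PreSys α) (X Y : Set α) : ℕ :=
  sInf {n | ∃ Z : Set α, X ⊆ Z ∧ Z ⊆ K.E \ Y ∧ K.lam Z = n}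

section Aux
variable {α : Type*} {M : Matroid α} [M.Finite] {X Y I J : Set α} {e : α}

lemma Matroid.IsBasis'.ncard_eq {I J X : Set α} {M : Matroid α} [M.Finite] (hI : M.IsBasis' I X)
    (hJ : M.IsBasis' J X) : I.ncard = J.ncard := by
  rw [Set.ncard_def, Set.ncard_def, hI.encard_eq_encard hJ]

lemma Matroid.IsBasis'.mrank_eq (hI : M.IsBasis' I X) : mrank M X = I.ncard := by
  apply IsGreatest.csSup_eq
  refine ⟨⟨I, hI.indep, hI.subset, rfl⟩, ?_⟩
  rintro n ⟨J, hJ, hJX, rfl⟩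
  obtain ⟨J', hJ', hJJ'⟩ := hJ.subset_isBasis'_of_subset hJX
  calc J.ncard ≤ J'.ncard := Set.ncard_le_ncard hJJ' (M.set_finite J' hJ'.indep.subset_ground)
  _ = I.ncard := hJ'.ncard_eq hI

lemma mrank_le_of_indep (hJ : M.Indep J) (hJX : J ⊆ X) : J.ncard ≤ mrank M X := by
  obtain ⟨I, hI⟩ := M.exists_isBasis' X
  rw [hI.mrank_eq]
  obtain ⟨J', hJ', hJJ'⟩ := hJ.subset_isBasis'_of_subset hJX
  calc J.ncard ≤ J'.ncard := Set.ncard_le_ncard hJJ' (M.set_finite J' hJ'.indep.subset_ground)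
  _ = I.ncard := hJ'.ncard_eq hI

lemma mrank_mono (h : X ⊆ Y) : mrank M X ≤ mrank M Y := by
  obtain ⟨I, hI⟩ := M.exists_isBasis' X
  rw [hI.mrank_eq]
  exact mrank_le_of_indep hI.indep (hI.subset.trans h)

lemma mrank_submod (M : Matroid α) [M.Finite] (X Y : Set α) :
    mrank M (X ∩ Y) + mrank M (X ∪ Y) ≤ mrank M X + mrank M Y := by
  obtain ⟨I, hI⟩ := M.exists_isBasis' (X ∩ Y)
  have hIXY : I ⊆ X ∪ Y := hI.subset.trans (inter_subset_left.trans subset_union_left)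
  obtain ⟨J, hJ, hIJ⟩ := hI.indep.subset_isBasis'_of_subset hIXY
  rw [hI.mrank_eq, hJ.mrank_eq]
  have hJfin : J.Finite := M.set_finite J hJ.indep.subset_ground
  have h1 : (J ∩ X).ncard ≤ mrank M X := mrank_le_of_indep (hJ.indep.subset inter_subset_left) inter_subset_right
  have h2 : (J ∩ Y).ncard ≤ mrank M Y := mrank_le_of_indep (hJ.indep.subset inter_subset_left) inter_subset_right
  have hu : (J ∩ X) ∪ (J ∩ Y) = J := by
    rw [← inter_union_distrib_left]
    exact inter_eq_left.2 hJ.subset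
  have hi : I ⊆ (J ∩ X) ∩ (J ∩ Y) := by
    intro a ha
    exact ⟨⟨hIJ ha, (hI.subset ha).1⟩, hIJ ha, (hI.subset ha).2⟩
  have key : (J ∩ X).ncard + (J ∩ Y).ncard = J.ncard + ((J ∩ X) ∩ (J ∩ Y)).ncard := by
    rw [← Set.ncard_union_add_ncard_inter (J ∩ X) (J ∩ Y) (hJfin.subset inter_subset_left)
      (hJfin.subset inter_subset_left), hu]
  have hIle : I.ncard ≤ ((J ∩ X) ∩ (J ∩ Y)).ncard :=
    Set.ncard_le_ncard hi (hJfin.subset (inter_subset_left.trans inter_subset_left))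
  omega

lemma mrank_singleton_le (M : Matroid α) [M.Finite] (e : α) : mrank M {e} ≤ 1 := by
  obtain ⟨I, hI⟩ := M.exists_isBasis' {e}
  rw [hI.mrank_eq]
  simpa using Set.ncard_le_ncard hI.subset (Set.finite_singleton e)

lemma mrank_union_singleton_le (M : Matroid α) [M.Finite] (X : Set α) (e : α) :
    mrank M (X ∪ {e}) ≤ mrank M X + 1 := by
  have := mrank_submod M X {e}
  have := mrank_singleton_le M e
  omega

section lams
variable (M : Matroid α) [M.Finite]

lemma mrank_add_mrank_diff_ge (hX : X ⊆ Y) : mrank M Y ≤ mrank M X + mrank M (Y \ X) := by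
  have h := mrank_submod M X (Y \ X)
  have h2 : X ∪ (Y \ X) = Y := Set.union_diff_cancel hX
  rw [h2] at h
  omega

lemma lamM_eq (hX : X ⊆ M.E) :
    lamM M X + mrank M M.E = mrank M X + mrank M (M.E \ X) + 1 := by
  have := mrank_add_mrank_diff_ge M hX
  unfold lamM
  omega

lemma lamDel_eq (hX : X ⊆ M.E \ {e}) :
    lamDel M e X + mrank M (M.E \ {e}) = mrank M X + mrank M ((M.E \ {e}) \ X) + 1 := by
  have := mrank_add_mrank_diff_ge M hX
  unfold lamDel
  omega

lemma diff_union_singleton (he : e ∈ M.E) (hX : X ⊆ M.E \ {e}) :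
    M.E \ X = ((M.E \ {e}) \ X) ∪ {e} := by
  have hx' : ∀ x ∈ X, x ∈ M.E ∧ x ≠ e := fun x h => ⟨(hX h).1, (hX h).2⟩
  have heX : e ∉ X := fun h => (hX h).2 rfl
  ext x
  by_cases hxe : x = e
  · subst hxe; simp [he, heX]
  · have := fun h : x ∈ X => hx' x h
    simp only [mem_union, mem_singleton_iff, mem_diff]
    tauto

lemma lamCon_eq (he : e ∈ M.E) (hX : X ⊆ M.E \ {e}) :
    lamCon M e X + mrank M {e} + mrank M M.E
      = mrank M (X ∪ {e}) + mrank M (((M.E \ {e}) \ X) ∪ {e}) + 1 := by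
  have h := mrank_submod M (X ∪ {e}) (((M.E \ {e}) \ X) ∪ {e})
  have hx' : ∀ x ∈ X, x ∈ M.E ∧ x ≠ e := fun x h => ⟨(hX h).1, (hX h).2⟩
  have heX : e ∉ X := fun h => (hX h).2 rfl
  have h1 : (X ∪ {e}) ∩ ((M.E \ {e}) \ X ∪ {e}) = {e} := by
    ext x
    by_cases hxe : x = e
    · subst hxe; simp [he, heX]
    · have := fun h : x ∈ X => hx' x h
      simp only [mem_inter_iff, mem_union, mem_singleton_iff, mem_diff]
      tauto
  have h2 : (X ∪ {e}) ∪ ((M.E \ {e}) \ X ∪ {e}) = M.E := by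
    ext x
    by_cases hxe : x = e
    · subst hxe; simp [he]
    · have := fun h : x ∈ X => hx' x h
      simp only [mem_union, mem_singleton_iff, mem_diff]
      tauto
  rw [h1, h2] at h
  have h3 : mrank M ({e} : Set α) ≤ mrank M (X ∪ {e}) := mrank_mono subset_union_right
  unfold lamCon
  omega

lemma lamM_compl (hX : X ⊆ M.E) : lamM M (M.E \ X) = lamM M X := by
  unfold lamM
  rw [Set.diff_diff_cancel_left hX, Nat.add_comm (mrank M (M.E \ X))]

lemma lamDel_le_lamM (he : e ∈ M.E) (hX : X ⊆ M.E \ {e}) : lamDel M e X ≤ lamM M X := by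
  have e1 := lamDel_eq M (e := e) hX
  have e2 := lamM_eq M (hX.trans diff_subset)
  rw [diff_union_singleton M he hX] at e2
  have h := mrank_submod M (((M.E \ {e}) \ X) ∪ {e}) (M.E \ {e})
  have h1 : (((M.E \ {e}) \ X) ∪ {e}) ∩ (M.E \ {e}) = (M.E \ {e}) \ X := by
    ext x
    by_cases hxe : x = e
    · subst hxe; simp
    · simp only [mem_inter_iff, mem_union, mem_singleton_iff, mem_diff]
      tauto
  have h2 : (((M.E \ {e}) \ X) ∪ {e}) ∪ (M.E \ {e}) = M.E := by
    ext x
    by_cases hxe : x = e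
    · subst hxe; simp [he]
    · simp only [mem_union, mem_singleton_iff, mem_diff]
      tauto
  rw [h1, h2] at h
  omega

lemma lamCon_le_lamM (he : e ∈ M.E) (hX : X ⊆ M.E \ {e}) : lamCon M e X ≤ lamM M X := by
  have e1 := lamCon_eq M he hX
  have e2 := lamM_eq M (hX.trans diff_subset)
  rw [diff_union_singleton M he hX] at e2
  have h := mrank_submod M X {e}
  have h1 : X ∩ {e} = ∅ := by
    ext x
    simp only [mem_inter_iff, mem_singleton_iff, mem_empty_iff_false, iff_false, not_and]
    rintro hx rfl; exact (hX hx).2 rfl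
  rw [h1] at h
  have h0 : mrank M (∅ : Set α) ≤ mrank M X := mrank_mono (empty_subset X)
  omega

lemma star_ineq (he : e ∈ M.E) (hrE : mrank M (M.E \ {e}) = mrank M M.E)
    (hre : mrank M {e} = 1) (hX : X ⊆ M.E \ {e}) (hY : Y ⊆ M.E \ {e}) :
    lamM M (X ∩ Y) + lamM M (X ∪ Y ∪ {e}) ≤ lamDel M e X + lamCon M e Y + 1 := by
  have hx' : ∀ x ∈ X, x ∈ M.E ∧ x ≠ e := fun x h => ⟨(hX h).1, (hX h).2⟩
  have heX : e ∉ X := fun h => (hX h).2 rfl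
  have hy' : ∀ x ∈ Y, x ∈ M.E ∧ x ≠ e := fun x h => ⟨(hY h).1, (hY h).2⟩
  have e1 := lamDel_eq M (e := e) hX
  have e2 := lamCon_eq M he hY
  have e3 := lamM_eq M (X := X ∩ Y) ((inter_subset_left.trans hX).trans diff_subset)
  have e4 : X ∪ Y ∪ {e} ⊆ M.E := by
    rintro x ((hx | hx) | hx)
    · exact (hX hx).1
    · exact (hY hx).1
    · rw [mem_singleton_iff] at hx; exact hx ▸ he
  have e5 := lamM_eq M e4
  -- first submodularity
  have s1 := mrank_submod M X (Y ∪ {e})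
  have i1 : X ∩ (Y ∪ {e}) = X ∩ Y := by
    ext x
    by_cases hxe : x = e
    · subst hxe
      simp [heX]
    · have := fun h : x ∈ X => hx' x h
      simp only [mem_inter_iff, mem_union, mem_singleton_iff]
      tauto
  have i2 : X ∪ (Y ∪ {e}) = X ∪ Y ∪ {e} := (union_assoc X Y {e}).symm
  rw [i1, i2] at s1
  -- second submodularity
  have s2 := mrank_submod M ((M.E \ {e}) \ X) (((M.E \ {e}) \ Y) ∪ {e})
  have i3 : ((M.E \ {e}) \ X) ∩ (((M.E \ {e}) \ Y) ∪ {e}) = M.E \ (X ∪ Y ∪ {e}) := by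
    ext x
    by_cases hxe : x = e
    · subst hxe; simp
    · simp only [mem_inter_iff, mem_union, mem_singleton_iff, mem_diff]
      tauto
  have i4 : ((M.E \ {e}) \ X) ∪ (((M.E \ {e}) \ Y) ∪ {e}) = M.E \ (X ∩ Y) := by
    ext x
    by_cases hxe : x = e
    · subst hxe
      simp [he, heX]
    · have := fun h : x ∈ X => hx' x h
      have := fun h : x ∈ Y => hy' x h
      simp only [mem_union, mem_singleton_iff, mem_diff, mem_inter_iff]
      tauto
  rw [i3, i4] at s2
  omega
end lams

lemma tangle_subset_mem {K₀ : PreSys α} {k : ℕ} {T : Set (Set α)} (hT : IsTangle K₀ k T)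
    {W Z : Set α} (hW : W ∈ T) (hZW : Z ⊆ W) (hZ : Z ⊆ K₀.E) (hlam : K₀.lam Z < k) : Z ∈ T := by
  obtain ⟨ax1, ax2, ax3, _⟩ := hT
  rw [ax2 Z hZ hlam]
  intro hmem
  apply ax3 W hW _ hmem _ hmem
  apply subset_antisymm
  · exact union_subset (union_subset (ax1 W hW).1 diff_subset) diff_subset
  · intro x hx
    by_cases hxZ : x ∈ Z
    · exact Or.inl (Or.inl (hZW hxZ))
    · exact Or.inr ⟨hx, hxZ⟩

lemma induced_transfer {K K₀ : PreSys α} {k : ℕ} {T₁ T₂ : Set (Set α)}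
    (hInd : InducedTangle K K₀ k T₁ = InducedTangle K K₀ k T₂) {Z : Set α}
    (hZE : Z ⊆ K.E) (hlam : K.lam Z < k) (hZK : Z ∩ K₀.E = Z) (h1 : Z ∈ T₁) : Z ∈ T₂ := by
  have hmem : Z ∈ InducedTangle K K₀ k T₁ := ⟨hZE, hlam, by rw [hZK]; exact h1⟩
  rw [hInd] at hmem
  have h := hmem.2.2
  rwa [hZK] at h

lemma splits_distinguisher {K K₀ : PreSys α} {k : ℕ} {T : Set (Set α)}
    (h : Splits K K₀ k T) :
    ∃ T₁ T₂ A, IsTangle K₀ k T₁ ∧ IsTangle K₀ k T₂ ∧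
      InducedTangle K K₀ k T₁ = T ∧ InducedTangle K K₀ k T₂ = T ∧
      A ∈ T₁ ∧ (K₀.E \ A) ∈ T₂ ∧ A ⊆ K₀.E ∧ K₀.lam A < k := by
  obtain ⟨T₁, T₂, hne, h1, h2, hi1, hi2⟩ := h
  have hex : ∃ A, (A ∈ T₁ ∧ A ∉ T₂) ∨ (A ∈ T₂ ∧ A ∉ T₁) := by
    by_contra hc
    push_neg at hc
    exact hne (Set.ext fun A => ⟨(hc A).1, (hc A).2⟩)
  obtain ⟨A, hA⟩ := hex
  rcases hA with ⟨hA1, hA2⟩ | ⟨hA2, hA1⟩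
  · obtain ⟨hsub, hlam⟩ := h1.1 A hA1
    refine ⟨T₁, T₂, A, h1, h2, hi1, hi2, hA1, ?_, hsub, hlam⟩
    by_contra hc
    exact hA2 ((h2.2.1 A hsub hlam).mpr hc)
  · obtain ⟨hsub, hlam⟩ := h2.1 A hA2
    refine ⟨T₂, T₁, A, h2, h1, hi2, hi1, hA2, ?_, hsub, hlam⟩
    by_contra hc
    exact hA1 ((h1.2.1 A hsub hlam).mpr hc)

lemma compl_inter_id {M : Matroid α} {X Y : Set α} {e : α} (he : e ∈ M.E)
    (hX : X ⊆ M.E \ {e}) (hY : Y ⊆ M.E \ {e}) :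
    ((M.E \ {e}) \ X) ∩ ((M.E \ {e}) \ Y) = M.E \ (X ∪ Y ∪ {e}) := by
  ext x
  by_cases hxe : x = e
  · subst hxe; simp
  · simp only [mem_inter_iff, mem_union, mem_singleton_iff, mem_diff]
    tauto

lemma cover_id {Ec A B : Set α} (hA : A ⊆ Ec) (hB : B ⊆ Ec) :
    (A ∩ B) ∪ (A ∩ (Ec \ B)) ∪ (Ec \ A) = Ec := by
  ext x
  simp only [mem_union, mem_inter_iff, mem_diff]
  constructor
  · rintro ((⟨h, _⟩ | ⟨h, _⟩) | ⟨h, _⟩) <;> first | exact hA h | exact h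
  · intro hx
    by_cases hxA : x ∈ A
    · by_cases hxB : x ∈ B
      · exact Or.inl (Or.inl ⟨hxA, hxB⟩)
      · exact Or.inl (Or.inr ⟨hxA, hx, hxB⟩)
    · exact Or.inr ⟨hx, hxA⟩

lemma pair_mem {K K₀ : PreSys α} {k : ℕ} {T₁ T₂ : Set (Set α)} {W Z : Set α}
    (h1 : IsTangle K₀ k T₁) (hInd : InducedTangle K K₀ k T₁ = InducedTangle K K₀ k T₂)
    (hW : W ∈ T₁) (hZW : Z ⊆ W) (hZ : Z ⊆ K₀.E) (hlam0 : K₀.lam Z < k)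
    (hZE : Z ⊆ K.E) (hlam : K.lam Z < k) (hcap : Z ∩ K₀.E = Z) : Z ∈ T₂ :=
  induced_transfer hInd hZE hlam hcap (tangle_subset_mem h1 hW hZW hZ hlam0)

end Aux

/-- Any element of a matroid can be removed, by deletion or
contraction, so that no tangle of `K(M)` splits. -/
theorem stmt5 {α : Type*} (M : Matroid α) [M.Finite] (e : α) (he : e ∈ M.E) :
    (∀ k : ℕ, ∀ T : Set (Set α), IsTangle (KM M) k T → ¬ Splits (KM M) (KDel M e) k T) ∨
    (∀ k : ℕ, ∀ T : Set (Set α), IsTangle (KM M) k T → ¬ Splits (KM M) (KCon M e) k T) := by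
  by_contra hcon
  push_neg at hcon
  obtain ⟨⟨k, T, hT, hS⟩, ⟨k', T', hT', hS'⟩⟩ := hcon
  obtain ⟨D₁, D₂, A, hD1, hD2, hiD1, hiD2, hAD1, hAcD2, hAsub, hlamA⟩ := splits_distinguisher hS
  obtain ⟨C₁, C₂, B, hC1, hC2, hiC1, hiC2, hBC1, hBcC2, hBsub, hlamB⟩ := splits_distinguisher hS'
  have hAsub' : A ⊆ M.E \ {e} := hAsub
  have hBsub' : B ⊆ M.E \ {e} := hBsub
  have hlamA' : lamDel M e A < k := hlamA
  have hlamB' : lamCon M e B < k' := hlamB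
  have hAcD2' : (M.E \ {e}) \ A ∈ D₂ := hAcD2
  have hBcC2' : (M.E \ {e}) \ B ∈ C₂ := hBcC2
  have hAE : A ⊆ M.E := fun x hx => (hAsub' hx).1
  have hBE : B ⊆ M.E := fun x hx => (hBsub' hx).1
  have hAcap : A ∩ (M.E \ {e}) = A := inter_eq_left.2 hAsub'
  have he' : ({e} : Set α) ⊆ M.E := singleton_subset_iff.2 he
  -- the distinguishing set has large connectivity in M
  have hkA : k ≤ lamM M A := by
    by_contra hc
    push_neg at hc
    have hmem : A ∈ InducedTangle (KM M) (KDel M e) k D₁ :=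
      ⟨hAE, hc, by rw [show A ∩ (KDel M e).E = A from hAcap]; exact hAD1⟩
    rw [hiD1, ← hiD2] at hmem
    have hAD2 : A ∈ D₂ := by
      have h := hmem.2.2
      rwa [show A ∩ (KDel M e).E = A from hAcap] at h
    exact (hD2.2.1 A hAsub hlamA).mp hAD2 hAcD2
  -- rank facts
  have hrE : mrank M (M.E \ {e}) = mrank M M.E ∧ mrank M {e} = 1 := by
    have e1 := lamM_eq M hAE
    rw [diff_union_singleton M he hAsub'] at e1
    have e2 := lamDel_eq M (e := e) hAsub'
    have s1 := mrank_submod M ((M.E \ {e}) \ A) {e}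
    have hid : ((M.E \ {e}) \ A) ∩ {e} = ∅ := by
      ext x
      simp only [mem_inter_iff, mem_diff, mem_singleton_iff, mem_empty_iff_false, iff_false,
        not_and]
      rintro ⟨⟨_, hxe⟩, _⟩ rfl
      exact hxe rfl
    rw [hid] at s1
    have h0 : mrank M (∅ : Set α) ≤ mrank M ((M.E \ {e}) \ A) := mrank_mono (empty_subset _)
    have hre1 := mrank_singleton_le M e
    have hmono : mrank M (M.E \ {e}) ≤ mrank M M.E := mrank_mono diff_subset
    have hsplit := mrank_add_mrank_diff_ge M (X := M.E \ {e}) (Y := M.E) diff_subset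
    rw [Set.diff_diff_cancel_left he'] at hsplit
    omega
  obtain ⟨hrE', hre⟩ := hrE
  -- abbreviations
  have hAcsub : (M.E \ {e}) \ A ⊆ M.E \ {e} := diff_subset
  have hBcsub : (M.E \ {e}) \ B ⊆ M.E \ {e} := diff_subset
  have hBcc : (M.E \ {e}) \ ((M.E \ {e}) \ B) = B := Set.diff_diff_cancel_left hBsub'
  have hAcc : (M.E \ {e}) \ ((M.E \ {e}) \ A) = A := Set.diff_diff_cancel_left hAsub'
  -- the two star inequalities
  have hPQ : lamM M (A ∩ B) + lamM M (((M.E \ {e}) \ A) ∩ ((M.E \ {e}) \ B)) < k + k' := by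
    have star1 := star_ineq M he hrE' hre hAsub' hBsub'
    have hABe : A ∪ B ∪ {e} ⊆ M.E := union_subset (union_subset hAE hBE) he'
    have hQ : lamM M (A ∪ B ∪ {e}) = lamM M (((M.E \ {e}) \ A) ∩ ((M.E \ {e}) \ B)) := by
      rw [compl_inter_id he hAsub' hBsub']
      exact (lamM_compl M hABe).symm
    rw [hQ] at star1
    omega
  have hRS : lamM M (A ∩ ((M.E \ {e}) \ B)) + lamM M (((M.E \ {e}) \ A) ∩ B) < k + k' := by
    have star2 := star_ineq M he hrE' hre hAsub' hBcsub
    have hlamBc : lamCon M e ((M.E \ {e}) \ B) < k' := (hC2.1 _ hBcC2).2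
    have hABce : A ∪ ((M.E \ {e}) \ B) ∪ {e} ⊆ M.E :=
      union_subset (union_subset hAE (hBcsub.trans diff_subset)) he'
    have hQ : lamM M (A ∪ ((M.E \ {e}) \ B) ∪ {e}) = lamM M (((M.E \ {e}) \ A) ∩ B) := by
      rw [← hBcc, compl_inter_id he hAsub' hBcsub, hBcc]
      exact (lamM_compl M hABce).symm
    rw [hQ] at star2
    omega
  -- the four tangle constraints
  have d1 : k ≤ lamM M (A ∩ B) ∨ k ≤ lamM M (A ∩ ((M.E \ {e}) \ B)) := by
    by_contra hc
    push_neg at hc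
    obtain ⟨hPk, hRk⟩ := hc
    have hZ1e : A ∩ B ⊆ M.E \ {e} := inter_subset_left.trans hAsub'
    have hZ2e : A ∩ ((M.E \ {e}) \ B) ⊆ M.E \ {e} := inter_subset_left.trans hAsub'
    have hZ1D2 : A ∩ B ∈ D₂ :=
      pair_mem hD1 (hiD1.trans hiD2.symm) hAD1 inter_subset_left hZ1e
        (lt_of_le_of_lt (lamDel_le_lamM M he hZ1e) hPk)
        (fun x hx => (hZ1e hx).1) hPk (inter_eq_left.2 hZ1e)
    have hZ2D2 : A ∩ ((M.E \ {e}) \ B) ∈ D₂ :=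
      pair_mem hD1 (hiD1.trans hiD2.symm) hAD1 inter_subset_left hZ2e
        (lt_of_le_of_lt (lamDel_le_lamM M he hZ2e) hRk)
        (fun x hx => (hZ2e hx).1) hRk (inter_eq_left.2 hZ2e)
    exact hD2.2.2.1 _ hZ1D2 _ hZ2D2 _ hAcD2 (cover_id hAsub' hBsub')
  have d2 : k ≤ lamM M (((M.E \ {e}) \ A) ∩ B) ∨
      k ≤ lamM M (((M.E \ {e}) \ A) ∩ ((M.E \ {e}) \ B)) := by
    by_contra hc
    push_neg at hc
    obtain ⟨hSk, hQk⟩ := hc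
    have hZ1e : ((M.E \ {e}) \ A) ∩ B ⊆ M.E \ {e} := inter_subset_left.trans hAcsub
    have hZ2e : ((M.E \ {e}) \ A) ∩ ((M.E \ {e}) \ B) ⊆ M.E \ {e} :=
      inter_subset_left.trans hAcsub
    have hZ1D1 : ((M.E \ {e}) \ A) ∩ B ∈ D₁ :=
      pair_mem hD2 (hiD2.trans hiD1.symm) hAcD2 inter_subset_left hZ1e
        (lt_of_le_of_lt (lamDel_le_lamM M he hZ1e) hSk)
        (fun x hx => (hZ1e hx).1) hSk (inter_eq_left.2 hZ1e)
    have hZ2D1 : ((M.E \ {e}) \ A) ∩ ((M.E \ {e}) \ B) ∈ D₁ :=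
      pair_mem hD2 (hiD2.trans hiD1.symm) hAcD2 inter_subset_left hZ2e
        (lt_of_le_of_lt (lamDel_le_lamM M he hZ2e) hQk)
        (fun x hx => (hZ2e hx).1) hQk (inter_eq_left.2 hZ2e)
    have cover := cover_id (Ec := M.E \ {e}) hAcsub hBsub'
    rw [hAcc] at cover
    exact hD1.2.2.1 _ hZ1D1 _ hZ2D1 _ hAD1 cover
  have d3 : k' ≤ lamM M (A ∩ B) ∨ k' ≤ lamM M (((M.E \ {e}) \ A) ∩ B) := by
    by_contra hc
    push_neg at hc
    obtain ⟨hPk, hSk⟩ := hc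
    have hZ1e : A ∩ B ⊆ M.E \ {e} := inter_subset_left.trans hAsub'
    have hZ2e : ((M.E \ {e}) \ A) ∩ B ⊆ M.E \ {e} := inter_subset_left.trans hAcsub
    have hZ1C2 : A ∩ B ∈ C₂ :=
      pair_mem hC1 (hiC1.trans hiC2.symm) hBC1 inter_subset_right hZ1e
        (lt_of_le_of_lt (lamCon_le_lamM M he hZ1e) hPk)
        (fun x hx => (hZ1e hx).1) hPk (inter_eq_left.2 hZ1e)
    have hZ2C2 : ((M.E \ {e}) \ A) ∩ B ∈ C₂ :=
      pair_mem hC1 (hiC1.trans hiC2.symm) hBC1 inter_subset_right hZ2e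
        (lt_of_le_of_lt (lamCon_le_lamM M he hZ2e) hSk)
        (fun x hx => (hZ2e hx).1) hSk (inter_eq_left.2 hZ2e)
    have cover := cover_id (Ec := M.E \ {e}) hBsub' hAsub'
    rw [inter_comm B A, inter_comm B ((M.E \ {e}) \ A)] at cover
    exact hC2.2.2.1 _ hZ1C2 _ hZ2C2 _ hBcC2 cover
  have d4 : k' ≤ lamM M (A ∩ ((M.E \ {e}) \ B)) ∨
      k' ≤ lamM M (((M.E \ {e}) \ A) ∩ ((M.E \ {e}) \ B)) := by
    by_contra hc
    push_neg at hc
    obtain ⟨hRk, hQk⟩ := hc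
    have hZ1e : A ∩ ((M.E \ {e}) \ B) ⊆ M.E \ {e} := inter_subset_left.trans hAsub'
    have hZ2e : ((M.E \ {e}) \ A) ∩ ((M.E \ {e}) \ B) ⊆ M.E \ {e} :=
      inter_subset_left.trans hAcsub
    have hZ1C1 : A ∩ ((M.E \ {e}) \ B) ∈ C₁ :=
      pair_mem hC2 (hiC2.trans hiC1.symm) hBcC2 inter_subset_right hZ1e
        (lt_of_le_of_lt (lamCon_le_lamM M he hZ1e) hRk)
        (fun x hx => (hZ1e hx).1) hRk (inter_eq_left.2 hZ1e)
    have hZ2C1 : ((M.E \ {e}) \ A) ∩ ((M.E \ {e}) \ B) ∈ C₁ :=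
      pair_mem hC2 (hiC2.trans hiC1.symm) hBcC2 inter_subset_right hZ2e
        (lt_of_le_of_lt (lamCon_le_lamM M he hZ2e) hQk)
        (fun x hx => (hZ2e hx).1) hQk (inter_eq_left.2 hZ2e)
    have cover := cover_id (Ec := M.E \ {e}) hBcsub hAsub'
    rw [hBcc, inter_comm ((M.E \ {e}) \ B) A, inter_comm ((M.E \ {e}) \ B) ((M.E \ {e}) \ A)]
      at cover
    exact hC1.2.2.1 _ hZ1C1 _ hZ2C1 _ hBC1 cover
  rcases d1 with h1 | h1 <;> rcases d2 with h2 | h2 <;> rcases d3 with h3 | h3 <;>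
    rcases d4 with h4 | h4 <;> omega
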